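/- arXiv:2012.15530 — 3 statements merged into one kernel-verified Lean document; each statement's English description precedes it below -/
import Mathlib

section
/- For every semi-norm s on ℝ², the Jacobian J(s) is at most the energy I₊²(s). Here I₊²(s) = max{s(v)² : |v| = 1} and, when s is a norm, J(s) is the unique number such that the Hausdorff 2-measure of any Borel set A ⊆ ℝ² with respect to the metric induced by s equals J(s) times the Lebesgue measure of A (and J(s) = 0 if s is degenerate). -/
open MeasureTheory

private lemma euclid_decomp (v : EuclideanSpace ℝ (Fin 2)) :
    v = v 0 • EuclideanSpace.single 0 (1:ℝ) + v 1 • EuclideanSpace.single 1 (1:ℝ) := by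
  ext i
  fin_cases i <;> simp [EuclideanSpace.single_apply]

private lemma abs_coord_le (v : EuclideanSpace ℝ (Fin 2)) (i : Fin 2) : |v i| ≤ ‖v‖ := by
  rw [EuclideanSpace.norm_eq]
  have h1 : |v i| = Real.sqrt (‖v i‖ ^ 2) := by
    rw [Real.sqrt_sq_eq_abs]; simp
  rw [h1]
  apply Real.sqrt_le_sqrt
  exact Finset.single_le_sum (f := fun j => ‖v j‖ ^ 2) (fun j _ => by positivity)
    (Finset.mem_univ i)

private lemma seminorm_bound (s : Seminorm ℝ (EuclideanSpace ℝ (Fin 2))) (v : EuclideanSpace ℝ (Fin 2)) :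
    s v ≤ (s (EuclideanSpace.single 0 1) + s (EuclideanSpace.single 1 1)) * ‖v‖ := by
  calc s v = s (v 0 • EuclideanSpace.single 0 (1:ℝ) + v 1 • EuclideanSpace.single 1 (1:ℝ)) := by
        rw [← euclid_decomp v]
    _ ≤ s (v 0 • EuclideanSpace.single 0 (1:ℝ)) + s (v 1 • EuclideanSpace.single 1 (1:ℝ)) :=
        map_add_le_add s _ _
    _ = |v 0| * s (EuclideanSpace.single 0 1) + |v 1| * s (EuclideanSpace.single 1 1) := by
        rw [map_smul_eq_mul, map_smul_eq_mul]; simp [Real.norm_eq_abs]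
    _ ≤ ‖v‖ * s (EuclideanSpace.single 0 1) + ‖v‖ * s (EuclideanSpace.single 1 1) :=
        add_le_add (mul_le_mul_of_nonneg_right (abs_coord_le v 0) (apply_nonneg s _))
          (mul_le_mul_of_nonneg_right (abs_coord_le v 1) (apply_nonneg s _))
    _ = (s (EuclideanSpace.single 0 1) + s (EuclideanSpace.single 1 1)) * ‖v‖ := by ring

/-- For every semi-norm `s` on Euclidean `ℝ²`, the Jacobian `J(s)` is at most
the energy `I₊²(s) = sup {s(v)² : ‖v‖ = 1}`.  The Jacobian is characterized by:
`J(s) = 0` if `s` is degenerate, and `J(s) · |{v : s v ≤ 1}| = π` if `s` is a norm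
(equivalently, the Hausdorff 2-measure induced by `s` is `J(s)` times Lebesgue measure). -/
theorem jacobian_le_energy (s : Seminorm ℝ (EuclideanSpace ℝ (Fin 2))) (J : ℝ)
    (hdeg : (∃ v : EuclideanSpace ℝ (Fin 2), v ≠ 0 ∧ s v = 0) → J = 0)
    (hnorm : (∀ v : EuclideanSpace ℝ (Fin 2), v ≠ 0 → s v ≠ 0) →
      J * (volume {v : EuclideanSpace ℝ (Fin 2) | s v ≤ 1}).toReal = Real.pi) :
    J ≤ sSup {x : ℝ | ∃ v : EuclideanSpace ℝ (Fin 2), ‖v‖ = 1 ∧ x = (s v) ^ 2} := by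
  set S : Set ℝ := {x : ℝ | ∃ v : EuclideanSpace ℝ (Fin 2), ‖v‖ = 1 ∧ x = (s v) ^ 2} with hS
  set C0 : ℝ := s (EuclideanSpace.single 0 1) + s (EuclideanSpace.single 1 1) with hC0
  have hC0nn : 0 ≤ C0 := add_nonneg (apply_nonneg s _) (apply_nonneg s _)
  have he1 : ‖(EuclideanSpace.single 0 (1:ℝ) : EuclideanSpace ℝ (Fin 2))‖ = 1 := by
    simp [EuclideanSpace.norm_single]
  have hne : S.Nonempty := ⟨(s (EuclideanSpace.single 0 1)) ^ 2,
    ⟨EuclideanSpace.single 0 1, he1, rfl⟩⟩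
  have hbdd : BddAbove S := by
    refine ⟨C0 ^ 2, fun x hx => ?_⟩
    obtain ⟨v, hv1, rfl⟩ := hx
    have := seminorm_bound s v
    rw [hv1, mul_one] at this
    exact pow_le_pow_left₀ (apply_nonneg s v) this 2
  -- sSup S is nonnegative
  have hSupNN : 0 ≤ sSup S := by
    refine le_trans ?_ (le_csSup hbdd (hne.choose_spec))
    obtain ⟨v, _, h⟩ := hne.choose_spec
    rw [h]; positivity
  by_cases hdeg' : ∃ v : EuclideanSpace ℝ (Fin 2), v ≠ 0 ∧ s v = 0
  · rw [hdeg hdeg']; exact hSupNN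
  push_neg at hdeg'
  have hpi := hnorm (fun v hv => hdeg' v hv)
  set C : ℝ := sSup S with hC
  -- s e₀ ≠ 0 gives C > 0
  have he1ne : (EuclideanSpace.single 0 (1:ℝ) : EuclideanSpace ℝ (Fin 2)) ≠ 0 := by
    intro h
    have := congrArg norm h
    rw [he1, norm_zero] at this
    norm_num at this
  have hCpos : 0 < C := by
    have h0 : (s (EuclideanSpace.single 0 1)) ^ 2 ≤ C :=
      le_csSup hbdd ⟨EuclideanSpace.single 0 1, he1, rfl⟩
    have := hdeg' _ he1ne
    have : 0 < (s (EuclideanSpace.single 0 1)) ^ 2 :=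
      pow_pos (lt_of_le_of_ne (apply_nonneg s _) (Ne.symm this)) 2
    linarith
  -- key bound: s v ≤ √C * ‖v‖
  have hkey : ∀ v : EuclideanSpace ℝ (Fin 2), s v ≤ Real.sqrt C * ‖v‖ := by
    intro v
    rcases eq_or_ne v 0 with rfl | hv
    · simp
    · have hnv : ‖v‖ ≠ 0 := norm_ne_zero_iff.mpr hv
      have hu : ‖(‖v‖⁻¹ • v : EuclideanSpace ℝ (Fin 2))‖ = 1 := by
        rw [norm_smul, norm_inv, norm_norm, inv_mul_cancel₀ hnv]
      have hmem : (s (‖v‖⁻¹ • v)) ^ 2 ∈ S := ⟨_, hu, rfl⟩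
      have hle : (s (‖v‖⁻¹ • v)) ^ 2 ≤ C := le_csSup hbdd hmem
      have h2 : s (‖v‖⁻¹ • v) ≤ Real.sqrt C := by
        rw [← Real.sqrt_sq (apply_nonneg s _)]
        exact Real.sqrt_le_sqrt hle
      have h3 : s (‖v‖⁻¹ • v) = ‖v‖⁻¹ * s v := by
        rw [map_smul_eq_mul]; simp [abs_of_nonneg (inv_nonneg.mpr (norm_nonneg v))]
      rw [h3] at h2
      calc s v = ‖v‖ * (‖v‖⁻¹ * s v) := by field_simp
        _ ≤ ‖v‖ * Real.sqrt C := by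
            exact mul_le_mul_of_nonneg_left h2 (norm_nonneg v)
        _ = Real.sqrt C * ‖v‖ := mul_comm _ _
  -- the closed ball of radius (√C)⁻¹ is inside the unit s-ball
  set r : ℝ := (Real.sqrt C)⁻¹ with hr
  have hsqrtpos : 0 < Real.sqrt C := Real.sqrt_pos.mpr hCpos
  have hrpos : 0 < r := inv_pos.mpr hsqrtpos
  have hsub : Metric.closedBall (0 : EuclideanSpace ℝ (Fin 2)) r ⊆
      {v : EuclideanSpace ℝ (Fin 2) | s v ≤ 1} := by
    intro v hv
    rw [Metric.mem_closedBall, dist_zero_right] at hv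
    have := hkey v
    have h2 : Real.sqrt C * ‖v‖ ≤ Real.sqrt C * r := mul_le_mul_of_nonneg_left hv hsqrtpos.le
    rw [hr, mul_inv_cancel₀ hsqrtpos.ne'] at h2
    exact le_trans this h2
  -- volume of the closed ball is π r²
  have hvolball : volume (Metric.closedBall (0 : EuclideanSpace ℝ (Fin 2)) r)
      = ENNReal.ofReal (Real.pi * r ^ 2) := by
    rw [EuclideanSpace.volume_closedBall]
    have hcard : Fintype.card (Fin 2) = 2 := by simp
    rw [hcard]
    rw [show ((2:ℕ) : ℝ) / 2 + 1 = 2 by norm_num, Real.Gamma_two]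
    rw [← ENNReal.ofReal_pow hrpos.le, ← ENNReal.ofReal_mul (by positivity)]
    congr 1
    rw [Real.sq_sqrt Real.pi_pos.le]
    ring
  have hmeas : volume (Metric.closedBall (0 : EuclideanSpace ℝ (Fin 2)) r) ≤
      volume {v : EuclideanSpace ℝ (Fin 2) | s v ≤ 1} := measure_mono hsub
  rw [hvolball] at hmeas
  -- The unit s-ball has finite volume? Not needed if infinite: then toReal = 0, J*0 = π contradiction
  set B := {v : EuclideanSpace ℝ (Fin 2) | s v ≤ 1} with hB
  have hBfin : volume B ≠ ⊤ := by
    intro htop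
    rw [htop] at hpi
    simp at hpi
    exact Real.pi_ne_zero hpi.symm
  have hBlow : Real.pi * r ^ 2 ≤ (volume B).toReal := by
    rw [← ENNReal.toReal_ofReal (show (0:ℝ) ≤ Real.pi * r ^ 2 by positivity)]
    exact ENNReal.toReal_mono hBfin hmeas
  have hBpos : 0 < (volume B).toReal := lt_of_lt_of_le (by positivity) hBlow
  -- From J * |B| = π : J = π / |B| ≤ π / (π r²) = 1/r² = C
  have hr2 : r ^ 2 = C⁻¹ := by
    rw [hr, ← Real.sqrt_inv, Real.sq_sqrt (inv_nonneg.mpr hCpos.le)]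
  have hJ : J = Real.pi / (volume B).toReal := by
    field_simp at hpi ⊢
    linarith [hpi]
  rw [hJ]
  rw [div_le_iff₀ hBpos]
  calc Real.pi = C * (Real.pi * r ^ 2) := by rw [hr2]; field_simp
    _ ≤ C * (volume B).toReal := by
        exact mul_le_mul_of_nonneg_left hBlow hCpos.le
end

section
/- Let K be a compact metric space, A ⊆ K a C-quasiconvex subset (any two points of A can be joined by a Lipschitz curve in A of length at most C times their distance), h : K → M a Lipschitz map to a metric space M, X a metric space, and v : M → X a map admitting an upper gradient ρ : M → [0,∞], i.e. d(v(γ(a)), v(γ(b))) ≤ ∫ₐᵇ ρ(γ(t))|γ'(t)| dt for every Lipschitz curve γ in M. If L := ∫_A ρ²∘h dH¹ < ∞, then v∘h restricted to A is (1/2)-Hölder continuous with Hölder constant (C·L)^{1/2}·Lip(h). -/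
open MeasureTheory Set
open scoped ENNReal NNReal

/-- Cauchy–Schwarz for the lower Lebesgue integral of an arbitrary (possibly non-measurable)
`ℝ≥0∞`-valued function. -/
lemma cs_aux {α : Type*} [MeasurableSpace α] (μ : Measure α) (f : α → ℝ≥0∞) :
    ∫⁻ a, f a ∂μ ≤ (∫⁻ a, f a ^ 2 ∂μ) ^ (1/2 : ℝ) * (μ univ) ^ (1/2 : ℝ) := by
  rw [MeasureTheory.lintegral_def]
  refine iSup₂_le fun φ hφ => ?_
  rw [← SimpleFunc.lintegral_eq_lintegral]
  have hconj : (2 : ℝ).HolderConjugate 2 := Real.HolderConjugate.two_two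
  have h1 : ∫⁻ a, φ a ∂μ = ∫⁻ a, ((⇑φ) * (fun _ => (1:ℝ≥0∞)) : α → ℝ≥0∞) a ∂μ := by simp
  have h2 := ENNReal.lintegral_mul_le_Lp_mul_Lq μ hconj (f := ⇑φ) (g := fun _ => (1:ℝ≥0∞))
    φ.measurable.aemeasurable aemeasurable_const
  rw [h1]
  refine h2.trans ?_
  gcongr with a
  · calc φ a ^ (2:ℝ) = φ a ^ (2:ℕ) := by
          rw [← ENNReal.rpow_natCast (φ a) 2]; norm_num
        _ ≤ f a ^ (2:ℕ) := pow_le_pow_left₀ zero_le (hφ a) 2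
  · simp

/-- An injective `1`-Lipschitz curve parametrized by arclength pushes Lebesgue measure on
`[0, T]` onto the Hausdorff `1`-measure of its image; consequently integrals along the curve
are dominated by Hausdorff integrals over the image. -/
lemma pushforward_aux {K : Type*} [MetricSpace K] [MeasurableSpace K] [BorelSpace K]
    (T : ℝ) (hT0 : 0 ≤ T) (γ : ℝ → K) (hγlip : LipschitzWith 1 γ)
    (hγinj : InjOn γ (Icc (0:ℝ) T))
    (hH : ∀ a b : ℝ, 0 ≤ a → a ≤ b → b ≤ T → μH[1] (γ '' Icc a b) = ENNReal.ofReal (b - a))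
    (g : K → ℝ≥0∞) :
    ∫⁻ t in Icc (0:ℝ) T, g (γ t) ≤ ∫⁻ z in γ '' Icc (0:ℝ) T, g z ∂(μH[1] : Measure K) := by
  set s : Set ℝ := Icc (0:ℝ) T with hs_def
  have hs : MeasurableSet s := measurableSet_Icc
  set S : Set K := γ '' s with hS_def
  have hScomp : IsCompact S := isCompact_Icc.image hγlip.continuous
  have hSmeas : MeasurableSet S := hScomp.isClosed.measurableSet
  haveI : CompactSpace s := isCompact_iff_compactSpace.mp isCompact_Icc
  set γ' : s → K := fun t => γ t.1 with hγ'_def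
  have hγ'cont : Continuous γ' := hγlip.continuous.comp continuous_subtype_val
  have hγ'inj : Function.Injective γ' := fun a b hab => Subtype.ext (hγinj a.2 b.2 hab)
  have me : MeasurableEmbedding γ' := (hγ'cont.isClosedEmbedding hγ'inj).measurableEmbedding
  have meval : MeasurableEmbedding (Subtype.val : s → ℝ) := MeasurableEmbedding.subtype_coe hs
  set ν : Measure K := (μH[1] : Measure K).restrict S with hν_def
  set m : Measure ℝ := Measure.map Subtype.val (Measure.comap γ' ν) with hm_def
  have himg : ∀ E : Set ℝ, γ' '' ((Subtype.val : s → ℝ) ⁻¹' E) = γ '' (E ∩ s) := by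
    intro E
    have h1 : γ' '' ((Subtype.val : s → ℝ) ⁻¹' E)
        = γ '' ((Subtype.val : s → ℝ) '' ((Subtype.val : s → ℝ) ⁻¹' E)) := by
      rw [hγ'_def, ← image_comp]; rfl
    rw [h1, Subtype.image_preimage_coe, inter_comm]
  have happly : ∀ E : Set ℝ, MeasurableSet E → m E = μH[1] (γ '' (E ∩ s)) := by
    intro E hE
    rw [hm_def, Measure.map_apply measurable_subtype_coe hE, me.comap_apply, himg,
      hν_def, Measure.restrict_apply' hSmeas, inter_eq_left.mpr (image_mono (f := γ) inter_subset_right)]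
  have hIcc : ∀ a b : ℝ, m (Icc a b) = ENNReal.ofReal (min b T - max a 0) := by
    intro a b
    rw [happly _ measurableSet_Icc, hs_def, Icc_inter_Icc]
    rcases le_or_gt (max a 0) (min b T) with hab | hab
    · exact hH _ _ (le_max_right a 0) hab (min_le_right b T)
    · rw [Icc_eq_empty hab.not_ge, image_empty, measure_empty,
        eq_comm, ENNReal.ofReal_eq_zero]
      linarith
  have hsing : ∀ a : ℝ, m {a} = 0 := by
    intro a
    have h1 := hIcc a a
    rw [Icc_self] at h1
    rw [h1, ENNReal.ofReal_eq_zero]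
    rcases le_or_gt a 0 with h0 | h0
    · have h2 : min a T ≤ 0 := le_trans (min_le_left a T) h0
      have h3 : (0:ℝ) ≤ max a 0 := le_max_right a 0
      linarith
    · rcases le_or_gt a T with h1 | h1
      · rw [min_eq_left h1, max_eq_left h0.le]; linarith
      · rw [min_eq_right h1.le, max_eq_left h0.le]; linarith
  have hmuniv : m univ = ENNReal.ofReal T := by
    rw [happly _ MeasurableSet.univ, univ_inter, hs_def, hH 0 T le_rfl hT0 le_rfl, sub_zero]
  haveI : IsFiniteMeasure m := ⟨by rw [hmuniv]; exact ENNReal.ofReal_lt_top⟩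
  have hkey : m = volume.restrict s := by
    refine Measure.ext_of_Ioc_finite m _ ?_ fun a b hab => ?_
    · rw [hmuniv, Measure.restrict_apply MeasurableSet.univ, univ_inter, hs_def,
        Real.volume_Icc, sub_zero]
    · have hIoc : ∀ (μ' : Measure ℝ), μ' {a} = 0 → μ' (Ioc a b) = μ' (Icc a b) := by
        intro μ' hμ'
        rw [← Set.Icc_diff_left, measure_diff_null hμ']
      have hv : volume.restrict s {a} = 0 :=
        le_antisymm (le_trans (Measure.restrict_le_self _) (by simp)) zero_le
      rw [hIoc m (hsing a), hIoc _ hv, hIcc,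
        Measure.restrict_apply' hs, hs_def, Icc_inter_Icc, Real.volume_Icc]
  calc ∫⁻ t in s, g (γ t) ∂volume = ∫⁻ t, g (γ t) ∂m := by rw [hkey]
    _ = ∫⁻ t : s, g (γ t.1) ∂(Measure.comap γ' ν) := meval.lintegral_map _
    _ = ∫⁻ z, g z ∂(Measure.map γ' (Measure.comap γ' ν)) := (me.lintegral_map _).symm
    _ = ∫⁻ z, g z ∂(ν.restrict (range γ')) := by rw [me.map_comap]
    _ ≤ ∫⁻ z, g z ∂ν := lintegral_mono' Measure.restrict_le_self le_rfl

/-- Let `A ⊆ K` be a `C`-quasiconvex subset of a compact metric space (any two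
points of `A` are joined by a simple arclength-parametrized curve in `A` of length at most `C`
times their distance), `h : K → M` Lipschitz, and `v : M → X` a map with upper gradient
`ρ : M → [0,∞]` (so that `d(v(γ(a)), v(γ(b))) ≤ ∫ₐᵇ ρ(γ(t)) |γ'(t)| dt` along Lipschitz
curves).  If `L = ∫_A ρ²∘h dH¹ < ∞`, then `v ∘ h` restricted to `A` is `(1/2)`-Hölder
continuous with Hölder constant `(C·L)^{1/2} · Lip(h)`. -/
theorem holder_of_upper_gradient_on_quasiconvex
    {K M X : Type*} [MetricSpace K] [CompactSpace K] [MetricSpace M] [MetricSpace X]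
    [MeasurableSpace K] [BorelSpace K]
    (A : Set K) (C : ℝ≥0)
    (hqc : ∀ x ∈ A, ∀ y ∈ A, ∃ (T : ℝ) (γ : ℝ → K), 0 ≤ T ∧ T ≤ C * dist x y ∧
      (∀ t ∈ Icc (0 : ℝ) T, γ t ∈ A) ∧ γ 0 = x ∧ γ T = y ∧ LipschitzWith 1 γ ∧
      InjOn γ (Icc (0 : ℝ) T) ∧
      ∀ a b : ℝ, 0 ≤ a → a ≤ b → b ≤ T → μH[1] (γ '' Icc a b) = ENNReal.ofReal (b - a))
    (h : K → M) (Lh : ℝ≥0) (hh : LipschitzWith Lh h)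
    (v : M → X) (ρ : M → ℝ≥0∞)
    (hug : ∀ (c : ℝ≥0) (γ : ℝ → M), LipschitzWith c γ → ∀ a b : ℝ, a ≤ b →
      edist (v (γ a)) (v (γ b)) ≤ ∫⁻ t in Icc a b, ρ (γ t) * c)
    (L : ℝ≥0∞) (hL : L = ∫⁻ x in A, (ρ (h x)) ^ 2 ∂μH[1]) (hLfin : L ≠ ∞) :
    ∀ x ∈ A, ∀ y ∈ A,
      edist (v (h x)) (v (h y)) ≤
        ((C : ℝ≥0∞) * L) ^ (1/2 : ℝ) * (Lh : ℝ≥0∞) * (edist x y) ^ (1/2 : ℝ) := by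
  intro x hx y hy
  obtain ⟨T, γ, hT0, hTC, hγA, hγ0, hγT, hγlip, hγinj, hH⟩ := hqc x hx y hy
  have hγh : LipschitzWith Lh (h ∘ γ) := by simpa using hh.comp hγlip
  have h1 := hug Lh (h ∘ γ) hγh 0 T hT0
  simp only [Function.comp_apply, hγ0, hγT] at h1
  set g : K → ℝ≥0∞ := fun z => ρ (h z) with hg_def
  have h2 : ∫⁻ t in Icc (0:ℝ) T, ρ (h (γ t)) * (Lh : ℝ≥0∞)
      = (∫⁻ t in Icc (0:ℝ) T, g (γ t)) * (Lh : ℝ≥0∞) :=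
    lintegral_mul_const' _ _ ENNReal.coe_ne_top
  have h3 : ∫⁻ t in Icc (0:ℝ) T, g (γ t)
      ≤ (∫⁻ t in Icc (0:ℝ) T, g (γ t) ^ 2) ^ (1/2 : ℝ) * (ENNReal.ofReal T) ^ (1/2 : ℝ) := by
    have := cs_aux (volume.restrict (Icc (0:ℝ) T)) (fun t => g (γ t))
    rwa [Measure.restrict_apply MeasurableSet.univ, univ_inter, Real.volume_Icc, sub_zero]
      at this
  have hSA : γ '' Icc (0:ℝ) T ⊆ A := by
    rintro z ⟨t, ht, rfl⟩; exact hγA t ht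
  have h4 : ∫⁻ t in Icc (0:ℝ) T, g (γ t) ^ 2 ≤ L := by
    calc ∫⁻ t in Icc (0:ℝ) T, g (γ t) ^ 2
        ≤ ∫⁻ z in γ '' Icc (0:ℝ) T, g z ^ 2 ∂(μH[1] : Measure K) :=
          pushforward_aux T hT0 γ hγlip hγinj hH (fun z => g z ^ 2)
      _ ≤ ∫⁻ z in A, g z ^ 2 ∂(μH[1] : Measure K) :=
          lintegral_mono' (Measure.restrict_mono hSA le_rfl) le_rfl
      _ = L := hL.symm
  have h5 : ENNReal.ofReal T ≤ (C : ℝ≥0∞) * edist x y := by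
    calc ENNReal.ofReal T ≤ ENNReal.ofReal ((C : ℝ) * dist x y) :=
          ENNReal.ofReal_le_ofReal hTC
      _ = (C : ℝ≥0∞) * edist x y := by
          rw [ENNReal.ofReal_mul C.coe_nonneg, ENNReal.ofReal_coe_nnreal, edist_dist]
  calc edist (v (h x)) (v (h y))
      ≤ ∫⁻ t in Icc (0:ℝ) T, ρ (h (γ t)) * (Lh : ℝ≥0∞) := h1
    _ = (∫⁻ t in Icc (0:ℝ) T, g (γ t)) * (Lh : ℝ≥0∞) := h2
    _ ≤ ((∫⁻ t in Icc (0:ℝ) T, g (γ t) ^ 2) ^ (1/2 : ℝ) * (ENNReal.ofReal T) ^ (1/2 : ℝ))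
          * (Lh : ℝ≥0∞) := by gcongr
    _ ≤ (L ^ (1/2 : ℝ) * ((C : ℝ≥0∞) * edist x y) ^ (1/2 : ℝ)) * (Lh : ℝ≥0∞) := by
        gcongr <;> norm_num
    _ = ((C : ℝ≥0∞) * L) ^ (1/2 : ℝ) * (Lh : ℝ≥0∞) * (edist x y) ^ (1/2 : ℝ) := by
        rw [ENNReal.mul_rpow_of_nonneg _ _ (by norm_num : (0:ℝ) ≤ 1/2),
          ENNReal.mul_rpow_of_nonneg _ _ (by norm_num : (0:ℝ) ≤ 1/2)]
        ring
end

section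
/- Let X be a geodesic metric space with the property that every closed curve in X of diameter at most 4r₀ is contractible, and let Γ = Γ₁ ∪ … ∪ Γ_k be a disjoint union of rectifiable Jordan curves in X with diam(Γᵢ) ≥ 3r₀ for all i. Then there exists δ with 0 < δ < r₀/3 such that whenever x, y ∈ Γ satisfy d(x,y) ≤ 9δ, then x and y lie on the same Jordan curve Γᵢ and one of the two arcs of Γᵢ joining x and y has diameter at most r₀. -/
open Set Metric
open scoped ENNReal

private lemma pos_min_on_compact {α : Type*} {X : Type*} [MetricSpace X] [TopologicalSpace α]
    {K : Set α} (hK : IsCompact K) {f : α → ℝ} (hf : ContinuousOn f K)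
    (hpos : ∀ x ∈ K, 0 < f x) : ∃ m > 0, ∀ x ∈ K, m ≤ f x := by
  rcases K.eq_empty_or_nonempty with h | h
  · exact ⟨1, one_pos, by simp [h]⟩
  · obtain ⟨x₀, hx₀, hmin⟩ := hK.exists_isMinOn h hf
    exact ⟨f x₀, hpos x₀ hx₀, fun x hx => hmin hx⟩

theorem close_points_on_same_jordan_curve
    {X : Type*} [MetricSpace X]
    (hgeodesic : ∀ x y : X, ∃ γ : C(unitInterval, X), γ 0 = x ∧ γ 1 = y ∧
      ∀ s t : unitInterval, dist (γ s) (γ t) = |(s : ℝ) - (t : ℝ)| * dist x y)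
    (r₀ : ℝ) (hr₀ : 0 < r₀)
    (hcontr : ∀ γ : C((sphere (0 : EuclideanSpace ℝ (Fin 2)) 1 :
        Set (EuclideanSpace ℝ (Fin 2))), X),
      diam (range γ) ≤ 4 * r₀ → ∃ x : X, ContinuousMap.Homotopic γ (ContinuousMap.const _ x))
    (k : ℕ) (c : Fin k → ℝ → X)
    (hc : ∀ i, Continuous (c i) ∧ Function.Periodic (c i) 1 ∧
      InjOn (c i) (Ico (0 : ℝ) 1) ∧ eVariationOn (c i) (Icc (0 : ℝ) 1) ≠ ∞)
    (hdisj : ∀ i j, i ≠ j → Disjoint (c i '' Icc (0 : ℝ) 1) (c j '' Icc (0 : ℝ) 1))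
    (hdiam : ∀ i, 3 * r₀ ≤ diam (c i '' Icc (0 : ℝ) 1)) :
    ∃ δ : ℝ, 0 < δ ∧ δ < r₀ / 3 ∧ ∀ x y : X,
      x ∈ ⋃ i, c i '' Icc (0 : ℝ) 1 → y ∈ ⋃ i, c i '' Icc (0 : ℝ) 1 → dist x y ≤ 9 * δ →
      ∃ i, x ∈ c i '' Icc (0 : ℝ) 1 ∧ y ∈ c i '' Icc (0 : ℝ) 1 ∧
        ∃ A : Set X, A ⊆ c i '' Icc (0 : ℝ) 1 ∧ IsConnected A ∧ x ∈ A ∧ y ∈ A ∧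
          diam A ≤ r₀ := by
  have hcont : ∀ i, Continuous (c i) := fun i => (hc i).1
  have hper : ∀ i, Function.Periodic (c i) 1 := fun i => (hc i).2.1
  have hinj : ∀ i, InjOn (c i) (Ico (0 : ℝ) 1) := fun i => (hc i).2.2.1
  by_cases hk : k = 0
  · refine ⟨r₀ / 6, by positivity, by linarith, ?_⟩
    intro x y hx _ _
    exfalso; subst hk
    simp at hx
  have hkpos : 0 < k := Nat.pos_of_ne_zero hk
  have : Nonempty (Fin k) := ⟨⟨0, hkpos⟩⟩
  -- uniform continuity constants
  have hUC : ∀ i : Fin k, ∃ θ > 0, ∀ u ∈ Icc (-1 : ℝ) 2, ∀ v ∈ Icc (-1 : ℝ) 2,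
      dist u v < θ → dist (c i u) (c i v) < r₀ := by
    intro i
    have h := isCompact_Icc.uniformContinuousOn_of_continuous
      ((hcont i).continuousOn : ContinuousOn (c i) (Icc (-1 : ℝ) 2))
    rw [Metric.uniformContinuousOn_iff] at h
    exact h r₀ hr₀
  choose θ₀ hθ₀pos hθ₀ using hUC
  set θ : Fin k → ℝ := fun i => min (θ₀ i) (1 / 2) with hθdef
  have hθpos : ∀ i, 0 < θ i := fun i => lt_min (hθ₀pos i) one_half_pos
  have hθle : ∀ i, θ i ≤ θ₀ i := fun i => min_le_left _ _
  -- separation between distinct curves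
  have hsep : ∀ p : Fin k × Fin k, ∃ m > 0, p.1 ≠ p.2 →
      ∀ s ∈ Icc (0 : ℝ) 1, ∀ t ∈ Icc (0 : ℝ) 1, m ≤ dist (c p.1 s) (c p.2 t) := by
    rintro ⟨i, j⟩
    by_cases hij : i = j
    · exact ⟨1, one_pos, fun h => absurd hij h⟩
    · have hposf : ∀ p ∈ Icc (0 : ℝ) 1 ×ˢ Icc (0 : ℝ) 1,
          0 < dist (c i p.1) (c j p.2) := by
        rintro ⟨s, t⟩ ⟨hs, ht⟩
        rw [dist_pos]
        intro heq
        exact Set.disjoint_left.1 (hdisj i j hij) ⟨s, hs, rfl⟩ ⟨t, ht, heq.symm⟩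
      have hcf : ContinuousOn (fun p : ℝ × ℝ => dist (c i p.1) (c j p.2))
          (Icc (0 : ℝ) 1 ×ˢ Icc (0 : ℝ) 1) :=
        (((hcont i).comp continuous_fst).dist ((hcont j).comp continuous_snd)).continuousOn
      obtain ⟨m, hm, hm2⟩ := pos_min_on_compact (X := X)
        (isCompact_Icc.prod isCompact_Icc) hcf hposf
      exact ⟨m, hm, fun _ s hs t ht => hm2 (s, t) ⟨hs, ht⟩⟩
  -- injectivity quantified: points with parameters far apart on the circle are apart
  have hsame : ∀ i : Fin k, ∃ m > 0, ∀ s ∈ Icc (0 : ℝ) 1, ∀ t ∈ Icc (0 : ℝ) 1,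
      θ i ≤ min |s - t| (1 - |s - t|) → m ≤ dist (c i s) (c i t) := by
    intro i
    have h10 : c i 1 = c i 0 := by simpa using hper i 0
    set K : Set (ℝ × ℝ) := (Icc (0 : ℝ) 1 ×ˢ Icc (0 : ℝ) 1) ∩
      {p : ℝ × ℝ | θ i ≤ min |p.1 - p.2| (1 - |p.1 - p.2|)} with hK
    have hsub : Continuous fun p : ℝ × ℝ => |p.1 - p.2| :=
      (continuous_fst.sub continuous_snd).abs
    have hKc : IsCompact K := by
      apply (isCompact_Icc.prod isCompact_Icc).inter_right
      exact isClosed_le continuous_const (hsub.min (continuous_const.sub hsub))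
    have hcf : ContinuousOn (fun p : ℝ × ℝ => dist (c i p.1) (c i p.2)) K :=
      (((hcont i).comp continuous_fst).dist ((hcont i).comp continuous_snd)).continuousOn
    have hposf : ∀ p ∈ K, 0 < dist (c i p.1) (c i p.2) := by
      rintro ⟨s, t⟩ ⟨⟨hs, ht⟩, hdist⟩
      simp only [mem_setOf_eq] at hdist
      rw [dist_pos]
      intro heq
      set s' : ℝ := if s = 1 then 0 else s with hs'def
      set t' : ℝ := if t = 1 then 0 else t with ht'def
      have hcs : c i s' = c i s := by
        by_cases h : s = 1 <;> simp [hs'def, h, h10.symm]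
      have hct : c i t' = c i t := by
        by_cases h : t = 1 <;> simp [ht'def, h, h10.symm]
      have hs'mem : s' ∈ Ico (0 : ℝ) 1 := by
        by_cases h : s = 1 <;> simp [hs'def, h]
        exact ⟨hs.1, lt_of_le_of_ne hs.2 h⟩
      have ht'mem : t' ∈ Ico (0 : ℝ) 1 := by
        by_cases h : t = 1 <;> simp [ht'def, h]
        exact ⟨ht.1, lt_of_le_of_ne ht.2 h⟩
      have h1 : s' = t' := hinj i hs'mem ht'mem (by rw [hcs, hct, heq])
      have habs : |s - t| = 0 ∨ |s - t| = 1 := by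
        by_cases h1s : s = 1 <;> by_cases h1t : t = 1
        · left; rw [h1s, h1t]; simp
        · right
          simp only [hs'def, ht'def, if_pos h1s, if_neg h1t] at h1
          rw [h1s, ← h1]; norm_num
        · right
          simp only [hs'def, ht'def, if_neg h1s, if_pos h1t] at h1
          rw [h1t, h1]; norm_num
        · left
          simp only [hs'def, ht'def, if_neg h1s, if_neg h1t] at h1
          rw [h1]; simp
      have hle1 := le_trans hdist (min_le_left _ _)
      have hle2 := le_trans hdist (min_le_right _ _)
      rcases habs with h | h <;> rw [h] at hle1 hle2 <;> linarith [hθpos i]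
    obtain ⟨m, hm, hm2⟩ := pos_min_on_compact (X := X) hKc hcf hposf
    exact ⟨m, hm, fun s hs t ht hd => hm2 (s, t) ⟨⟨hs, ht⟩, hd⟩⟩
  choose msep hmseppos hmsep using hsep
  choose msame hmsamepos hmsame using hsame
  set m : ℝ := min ((Finset.univ : Finset (Fin k × Fin k)).inf' Finset.univ_nonempty msep)
    ((Finset.univ : Finset (Fin k)).inf' Finset.univ_nonempty msame) with hmdef
  have hmpos : 0 < m :=
    lt_min ((Finset.lt_inf'_iff _).2 fun p _ => hmseppos p)
      ((Finset.lt_inf'_iff _).2 fun i _ => hmsamepos i)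
  have hmsep' : ∀ p, m ≤ msep p := fun p =>
    le_trans (min_le_left _ _) (Finset.inf'_le _ (Finset.mem_univ p))
  have hmsame' : ∀ i, m ≤ msame i := fun i =>
    le_trans (min_le_right _ _) (Finset.inf'_le _ (Finset.mem_univ i))
  refine ⟨min (r₀ / 6) (m / 18), lt_min (by positivity) (by positivity), ?_, ?_⟩
  · have := min_le_left (r₀ / 6) (m / 18); linarith
  intro x y hx hy hxy
  have hδm : 9 * min (r₀ / 6) (m / 18) < m := by
    have := min_le_right (r₀ / 6) (m / 18); linarith
  simp only [mem_iUnion] at hx hy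
  obtain ⟨i, s, hs, rfl⟩ := hx
  obtain ⟨j, t, ht, rfl⟩ := hy
  have hltm : dist (c i s) (c j t) < m := lt_of_le_of_lt hxy hδm
  have hij : i = j := by
    by_contra hne'
    exact absurd (hmsep (i, j) hne' s hs t ht) (by push_neg; exact lt_of_lt_of_le hltm (hmsep' _))
  subst hij
  have hlt : min |s - t| (1 - |s - t|) < θ i := by
    by_contra h
    push_neg at h
    exact absurd (hmsame i s hs t ht h) (by push_neg; exact lt_of_lt_of_le hltm (hmsame' _))
  -- key construction of the small arc
  have key : ∀ a b : ℝ, a ∈ Icc (0 : ℝ) 1 → b ∈ Icc (0 : ℝ) 1 → a ≤ b →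
      min (b - a) (1 - (b - a)) < θ i →
      ∃ A : Set X, A ⊆ c i '' Icc (0 : ℝ) 1 ∧ IsConnected A ∧ c i a ∈ A ∧ c i b ∈ A ∧
        diam A ≤ r₀ := by
    intro a b ha hb hab hmin
    rcases lt_or_ge (b - a) (θ i) with hcase | hcase
    · refine ⟨c i '' Icc a b, image_mono (Icc_subset_Icc ha.1 hb.2),
        (isConnected_Icc hab).image _ (hcont i).continuousOn,
        ⟨a, ⟨le_refl a, hab⟩, rfl⟩, ⟨b, ⟨hab, le_refl b⟩, rfl⟩, ?_⟩
      apply diam_le_of_forall_dist_le hr₀.le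
      rintro _ ⟨u, hu, rfl⟩ _ ⟨v, hv, rfl⟩
      apply le_of_lt
      apply hθ₀ i u ⟨by linarith [ha.1, hu.1], by linarith [hb.2, hu.2]⟩
        v ⟨by linarith [ha.1, hv.1], by linarith [hb.2, hv.2]⟩
      rw [Real.dist_eq]
      have : |u - v| ≤ b - a := abs_le.2 ⟨by linarith [hu.1, hv.2], by linarith [hu.2, hv.1]⟩
      linarith [hθle i]
    · have h2 : 1 - (b - a) < θ i := by
        rcases min_lt_iff.1 hmin with h | h
        · linarith
        · exact h
      have hba1 : b - 1 ≤ a := by linarith [hb.2, ha.1]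
      have hcb : c i (b - 1) = c i b := by
        have := hper i (b - 1)
        simpa using this.symm
      refine ⟨c i '' Icc (b - 1) a, ?_,
        (isConnected_Icc hba1).image _ (hcont i).continuousOn,
        ⟨a, ⟨hba1, le_refl a⟩, rfl⟩, ⟨b - 1, ⟨le_refl _, hba1⟩, hcb⟩, ?_⟩
      · rintro _ ⟨u, ⟨hu1, hu2⟩, rfl⟩
        rcases le_or_gt 0 u with h | h
        · exact ⟨u, ⟨h, hu2.trans ha.2⟩, rfl⟩
        · refine ⟨u + 1, ⟨by linarith [hb.1], by linarith⟩, ?_⟩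
          simpa using hper i u
      · apply diam_le_of_forall_dist_le hr₀.le
        rintro _ ⟨u, hu, rfl⟩ _ ⟨v, hv, rfl⟩
        apply le_of_lt
        apply hθ₀ i u ⟨by linarith [hb.1, hu.1], by linarith [ha.2, hu.2]⟩
          v ⟨by linarith [hb.1, hv.1], by linarith [ha.2, hv.2]⟩
        rw [Real.dist_eq]
        have : |u - v| ≤ a - (b - 1) :=
          abs_le.2 ⟨by linarith [hu.1, hv.2], by linarith [hu.2, hv.1]⟩
        linarith [hθle i]
  rcases le_total s t with h | h
  · have habs : |s - t| = t - s := by rw [abs_sub_comm, abs_of_nonneg (by linarith)]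
    rw [habs] at hlt
    obtain ⟨A, hA1, hA2, hA3, hA4, hA5⟩ := key s t hs ht h hlt
    exact ⟨i, ⟨s, hs, rfl⟩, ⟨t, ht, rfl⟩, A, hA1, hA2, hA3, hA4, hA5⟩
  · have habs : |s - t| = s - t := abs_of_nonneg (by linarith)
    rw [habs] at hlt
    obtain ⟨A, hA1, hA2, hA3, hA4, hA5⟩ := key t s ht hs h hlt
    exact ⟨i, ⟨s, hs, rfl⟩, ⟨t, ht, rfl⟩, A, hA1, hA2, hA4, hA3, hA5⟩
end
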